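/- Theorem P1c: Fix ρ₀ and m₀ with m₀' = 4πρ₀r², and let p₁, p₂, p₃ be three solutions of the TOV pressure equation. Then for any λ ∈ ℝ the function p(r) = [λ p₁(p₃-p₂) + (1-λ)p₂(p₃-p₁)]/[λ(p₃-p₂) + (1-λ)(p₃-p₁)] is also a solution of the TOV pressure equation on any interval where the denominator is nonzero. -/

import Mathlib

set_option maxHeartbeats 4000000

/-- Theorem P1c: three solutions of the TOV pressure equation
(fixed ρ₀, m₀) generate the general solution with no integrations. -/
theorem TOV_theorem_P1c
    (R : ℝ) (hR : 0 < R) (ρ₀ m₀ p₁ p₂ p₃ p : ℝ → ℝ) (lam : ℝ)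
    (hmetric : ∀ r ∈ Set.Ioc (0:ℝ) R, 0 < 1 - 2 * m₀ r / r)
    (hm : ∀ r ∈ Set.Ioc (0:ℝ) R, HasDerivAt m₀ (4 * Real.pi * ρ₀ r * r^2) r)
    (hTOV₁ : ∀ r ∈ Set.Ioc (0:ℝ) R,
      HasDerivAt p₁ (-((ρ₀ r + p₁ r) * (m₀ r + 4 * Real.pi * p₁ r * r^3)
        / (r^2 * (1 - 2 * m₀ r / r)))) r)
    (hTOV₂ : ∀ r ∈ Set.Ioc (0:ℝ) R,
      HasDerivAt p₂ (-((ρ₀ r + p₂ r) * (m₀ r + 4 * Real.pi * p₂ r * r^3)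
        / (r^2 * (1 - 2 * m₀ r / r)))) r)
    (hTOV₃ : ∀ r ∈ Set.Ioc (0:ℝ) R,
      HasDerivAt p₃ (-((ρ₀ r + p₃ r) * (m₀ r + 4 * Real.pi * p₃ r * r^3)
        / (r^2 * (1 - 2 * m₀ r / r)))) r)
    (hp : ∀ r, p r =
      (lam * p₁ r * (p₃ r - p₂ r) + (1 - lam) * p₂ r * (p₃ r - p₁ r))
        / (lam * (p₃ r - p₂ r) + (1 - lam) * (p₃ r - p₁ r)))
    (hden : ∀ r ∈ Set.Ioc (0:ℝ) R,
      (lam * (p₃ r - p₂ r) + (1 - lam) * (p₃ r - p₁ r)) ≠ 0) :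
    ∀ r ∈ Set.Ioc (0:ℝ) R,
      HasDerivAt p (-((ρ₀ r + p r) * (m₀ r + 4 * Real.pi * p r * r^3)
        / (r^2 * (1 - 2 * m₀ r / r)))) r := by
  intro r hr
  have hr0 : (0:ℝ) < r := hr.1
  have h1 := hTOV₁ r hr
  have h2 := hTOV₂ r hr
  have h3 := hTOV₃ r hr
  have hDn := hden r hr
  set D : ℝ := r^2 * (1 - 2 * m₀ r / r) with hDdef
  have hD : D ≠ 0 := mul_ne_zero (pow_ne_zero 2 hr0.ne') (hmetric r hr).ne'
  set A : ℝ := -(ρ₀ r * m₀ r / D) with hA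
  set B : ℝ := -((m₀ r + 4 * Real.pi * ρ₀ r * r^3) / D) with hB
  set C : ℝ := -(4 * Real.pi * r^3 / D) with hC
  have hABC : ∀ x : ℝ,
      -((ρ₀ r + x) * (m₀ r + 4 * Real.pi * x * r^3) / D) = A + B * x + C * x^2 := by
    intro x
    rw [hA, hB, hC]
    field_simp
    ring
  rw [hABC (p₁ r)] at h1
  rw [hABC (p₂ r)] at h2
  rw [hABC (p₃ r)] at h3
  have hN : HasDerivAt
      (fun x => lam * p₁ x * (p₃ x - p₂ x) + (1 - lam) * p₂ x * (p₃ x - p₁ x))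
      ((lam * (A + B * p₁ r + C * p₁ r ^ 2)) * (p₃ r - p₂ r)
        + (lam * p₁ r) * ((A + B * p₃ r + C * p₃ r ^ 2) - (A + B * p₂ r + C * p₂ r ^ 2))
        + (((1 - lam) * (A + B * p₂ r + C * p₂ r ^ 2)) * (p₃ r - p₁ r)
          + ((1 - lam) * p₂ r) * ((A + B * p₃ r + C * p₃ r ^ 2) - (A + B * p₁ r + C * p₁ r ^ 2)))) r :=
    ((h1.const_mul lam).mul (h3.sub h2)).add (((h2.const_mul (1 - lam)).mul (h3.sub h1)))
  have hDn' : HasDerivAt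
      (fun x => lam * (p₃ x - p₂ x) + (1 - lam) * (p₃ x - p₁ x))
      (lam * ((A + B * p₃ r + C * p₃ r ^ 2) - (A + B * p₂ r + C * p₂ r ^ 2))
        + (1 - lam) * ((A + B * p₃ r + C * p₃ r ^ 2) - (A + B * p₁ r + C * p₁ r ^ 2))) r :=
    ((h3.sub h2).const_mul lam).add ((h3.sub h1).const_mul (1 - lam))
  have hq := hN.div hDn' hDn
  have hpfun : p = fun x =>
      (lam * p₁ x * (p₃ x - p₂ x) + (1 - lam) * p₂ x * (p₃ x - p₁ x))
        / (lam * (p₃ x - p₂ x) + (1 - lam) * (p₃ x - p₁ x)) := funext hp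
  rw [hABC (p r), hp r, hpfun]
  refine hq.congr_deriv ?_
  field_simp
  ring
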